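/- The minor poset of the chain of length n with its minimal generating set is isomorphic to the Boolean algebra B_{n+1}. -/
import Mathlib


open Finset

/-- A generator-enriched lattice datum inside an ambient lattice `L`:
a minimal element `z` together with a finite generating set of elements
strictly above `z`. The underlying set of elements consists of all joins
of `z` with subsets of the generating set. -/
structure GEL (L : Type*) [Lattice L] [DecidableEq L] where
  z : L
  gens : Finset L
  lt_gens : ∀ g ∈ gens, z < g

namespace GEL

variable {L K : Type*} [Lattice L] [OrderBot L] [DecidableEq L]

/-- The underlying set of elements of a generator enriched lattice. -/
def carrier (M : GEL L) : Finset L :=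
  M.gens.powerset.image fun X => X.sup id ⊔ M.z

/-- Deletion of a set of generators. -/
def delete (M : GEL L) (I : Finset L) : GEL L :=
  ⟨M.z, M.gens \ I, fun g hg => M.lt_gens g (Finset.mem_sdiff.mp hg).1⟩

/-- Restriction to a set of generators. -/
def restrict (M : GEL L) (I : Finset L) : GEL L :=
  M.delete (M.gens \ I)

/-- Contraction by a set of generators. -/
def contract (M : GEL L) (I : Finset L) : GEL L :=
  ⟨I.sup id ⊔ M.z,
   (M.gens.image fun g => g ⊔ (I.sup id ⊔ M.z)).erase (I.sup id ⊔ M.z),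
   fun g hg => by
     obtain ⟨hne, hg'⟩ := Finset.mem_erase.mp hg
     obtain ⟨h, -, rfl⟩ := Finset.mem_image.mp hg'
     exact lt_of_le_of_ne le_sup_right (Ne.symm hne)⟩

open Classical in
/-- Contraction by an element: contract by all generators below it. -/
noncomputable def contractEl (M : GEL L) (ℓ : L) : GEL L :=
  M.contract (M.gens.filter fun g => g ≤ ℓ)

/-- A single deletion or contraction step. -/
def Step (M N : GEL L) : Prop :=
  ∃ I ⊆ M.gens, N = M.delete I ∨ N = M.contract I

/-- `Minor M N` : `N` is a minor of `M`, i.e. obtained from `M` by a finite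
sequence of deletions and contractions. -/
def Minor (M N : GEL L) : Prop :=
  Relation.ReflTransGen Step M N

/-- The generator enriched lattice on a lattice with `⊥`, with the given generating set. -/
def ofGens (G : Finset L) (hG : ∀ g ∈ G, (⊥ : L) < g) : GEL L :=
  ⟨⊥, G, hG⟩

/-- The underlying type of the minor poset of `T`: all minors of `T`
together with an adjoined minimum `none`. -/
abbrev MP (T : GEL L) := Option {M : GEL L // T.Minor M}

/-- The order relation of the minor poset. -/
def mple (T : GEL L) : MP T → MP T → Prop
  | none, _ => True
  | some _, none => False
  | some A, some B => B.1.Minor A.1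

/-- The rank function of the minor poset. -/
def mrank (T : GEL L) : MP T → ℕ
  | none => 0
  | some A => A.1.gens.card + 1

/-- A parallel: an element `ℓ` and distinct generators `g, h` with
`g ⊔ ℓ = h ⊔ ℓ ≠ ℓ`. -/
def HasParallel (M : GEL L) : Prop :=
  ∃ ℓ ∈ M.carrier, ∃ g ∈ M.gens, ∃ h ∈ M.gens,
    g ≠ h ∧ g ⊔ ℓ = h ⊔ ℓ ∧ g ⊔ ℓ ≠ ℓ

/-- Isomorphism of generator enriched lattices: a join-preserving bijection of the
underlying sets carrying the generating set onto the generating set. -/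
def GIso [Lattice K] [OrderBot K] [DecidableEq K] (M : GEL L) (N : GEL K) : Prop :=
  ∃ f : L → K, Set.BijOn f ↑M.carrier ↑N.carrier ∧
    (∀ a ∈ M.carrier, ∀ b ∈ M.carrier, f (a ⊔ b) = f a ⊔ f b) ∧
    f '' ↑M.gens = ↑N.gens

open Classical in
/-- The image generator enriched lattice `⟨f(I) | f(z)⟩` of a strong map. -/
noncomputable def map [Lattice K] [DecidableEq K] (f : L → K) (M : GEL L) : GEL K :=
  ⟨f M.z, (M.gens.image f).filter fun y => f M.z < y,
   fun g hg => (Finset.mem_filter.mp hg).2⟩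

/-- `T` lifts join irreducibles: for every `ℓ` and generator `g` with `g ≰ ℓ`,
the element `g ⊔ ℓ` is join irreducible in the interval `[ℓ, ⊤]`. -/
def LiftsJI (T : GEL L) : Prop :=
  ∀ ℓ : L, ∀ g ∈ T.gens, ¬ g ≤ ℓ →
    ∀ a b : L, ℓ ≤ a → ℓ ≤ b → g ⊔ ℓ = a ⊔ b → g ⊔ ℓ = a ∨ g ⊔ ℓ = b

end GEL

/-- The chain of length `n` with its minimal generating set `{1, …, n}`. -/
noncomputable def chainGEL (n : ℕ) : GEL (Fin (n + 1)) :=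
  GEL.ofGens ((Finset.univ : Finset (Fin (n + 1))).erase ⊥)
    (fun g hg => bot_lt_iff_ne_bot.mpr (Finset.mem_erase.mp hg).1)

namespace ChainProof

lemma GEL.ext' {L : Type*} [Lattice L] [DecidableEq L] {M N : GEL L}
    (hz : M.z = N.z) (hg : M.gens = N.gens) : M = N := by
  cases M; cases N; simp_all

lemma delete_eq {L : Type*} [Lattice L] [OrderBot L] [DecidableEq L] (M N : GEL L)
    (hz : N.z = M.z) (hg : N.gens ⊆ M.gens) :
    N = M.delete (M.gens \ N.gens) := by
  refine GEL.ext' hz ?_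
  show N.gens = M.gens \ (M.gens \ N.gens)
  exact (Finset.sdiff_sdiff_eq_self hg).symm

lemma step_delete {L : Type*} [Lattice L] [OrderBot L] [DecidableEq L] (M N : GEL L)
    (hz : N.z = M.z) (hg : N.gens ⊆ M.gens) : GEL.Step M N :=
  ⟨M.gens \ N.gens, Finset.sdiff_subset, Or.inl (delete_eq M N hz hg)⟩

variable {n : ℕ}

lemma contract_single_z (M : GEL (Fin (n + 1))) (x : Fin (n + 1)) (hx : M.z < x) :
    (M.contract {x}).z = x := by
  show ({x} : Finset (Fin (n + 1))).sup id ⊔ M.z = x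
  rw [Finset.sup_singleton]; exact sup_eq_left.mpr hx.le

lemma mem_contract_single (M : GEL (Fin (n + 1))) (x : Fin (n + 1)) (hx : M.z < x)
    {g : Fin (n + 1)} (hg : g ∈ M.gens) (hgx : x < g) :
    g ∈ (M.contract {x}).gens := by
  have hs : ({x} : Finset (Fin (n + 1))).sup id ⊔ M.z = x := by
    rw [Finset.sup_singleton]; exact sup_eq_left.mpr hx.le
  show g ∈ (M.gens.image fun h => h ⊔ (({x} : Finset _).sup id ⊔ M.z)).erase
      (({x} : Finset _).sup id ⊔ M.z)
  rw [hs]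
  refine Finset.mem_erase.mpr ⟨hgx.ne', Finset.mem_image.mpr ⟨g, hg, ?_⟩⟩
  exact sup_eq_left.mpr hgx.le

lemma step_subset (M N : GEL (Fin (n + 1))) (h : GEL.Step M N) :
    insert N.z N.gens ⊆ insert M.z M.gens := by
  obtain ⟨I, hI, hN | hN⟩ := h
  · subst hN
    intro x hx
    rcases Finset.mem_insert.mp hx with h | h
    · exact Finset.mem_insert.mpr (Or.inl h)
    · exact Finset.mem_insert.mpr (Or.inr (Finset.mem_sdiff.mp h).1)
  · subst hN
    have hs : I.sup id ⊔ M.z ∈ insert M.z M.gens := by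
      rcases I.eq_empty_or_nonempty with rfl | hne
      · simp
      · obtain ⟨b, hb, hsup⟩ := Finset.exists_mem_eq_sup I hne id
        have hmem : b ∈ M.gens := hI hb
        rw [hsup, id_eq, sup_eq_left.mpr (M.lt_gens _ hmem).le]
        exact Finset.mem_insert.mpr (Or.inr hmem)
    intro x hx
    rcases Finset.mem_insert.mp hx with h | h
    · rwa [h]
    · obtain ⟨hne, hx'⟩ := Finset.mem_erase.mp h
      obtain ⟨g, hg, rfl⟩ := Finset.mem_image.mp hx'
      rcases le_total g (I.sup id ⊔ M.z) with hle | hle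
      · exact absurd (sup_eq_right.mpr hle) hne
      · rw [sup_eq_left.mpr hle]
        exact Finset.mem_insert.mpr (Or.inr hg)

lemma subset_of_minor (M N : GEL (Fin (n + 1))) (h : M.Minor N) :
    insert N.z N.gens ⊆ insert M.z M.gens := by
  induction h with
  | refl => exact subset_rfl
  | tail _ hstep ih => exact (step_subset _ _ hstep).trans ih

lemma minor_of_subset (M N : GEL (Fin (n + 1)))
    (h : insert N.z N.gens ⊆ insert M.z M.gens) : M.Minor N := by
  have hz : N.z = M.z ∨ N.z ∈ M.gens :=
    Finset.mem_insert.mp (h (Finset.mem_insert_self _ _))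
  have hzle : M.z ≤ N.z := by
    rcases hz with h' | h'
    · exact h'.ge
    · exact (M.lt_gens _ h').le
  have hgens : N.gens ⊆ M.gens := by
    intro g hg
    rcases Finset.mem_insert.mp (h (Finset.mem_insert_of_mem hg)) with h' | h'
    · exact absurd h' (ne_of_gt (lt_of_le_of_lt hzle (N.lt_gens g hg)))
    · exact h'
  rcases hz with hz | hz
  · exact Relation.ReflTransGen.single (step_delete M N hz hgens)
  · have hlt : M.z < N.z := M.lt_gens _ hz
    have step1 : GEL.Step M (M.contract {N.z}) :=
      ⟨{N.z}, Finset.singleton_subset_iff.mpr hz, Or.inr rfl⟩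
    have hz' : (M.contract {N.z}).z = N.z := contract_single_z M N.z hlt
    have step2 : GEL.Step (M.contract {N.z}) N := by
      refine step_delete _ _ hz'.symm ?_
      intro g hg
      exact mem_contract_single M N.z hlt (hgens hg) (N.lt_gens g hg)
    exact Relation.ReflTransGen.head step1 (Relation.ReflTransGen.single step2)

lemma chain_minor (M : GEL (Fin (n + 1))) : (chainGEL n).Minor M := by
  refine minor_of_subset _ _ ?_
  intro x hx
  have hx' : (⊥ : Fin (n + 1)) ≤ M.z := bot_le
  rcases Finset.mem_insert.mp hx with h | h
  · by_cases hb : x = (chainGEL n).z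
    · exact Finset.mem_insert.mpr (Or.inl hb)
    · refine Finset.mem_insert.mpr (Or.inr ?_)
      exact Finset.mem_erase.mpr ⟨hb, Finset.mem_univ _⟩
  · refine Finset.mem_insert.mpr (Or.inr ?_)
    refine Finset.mem_erase.mpr ⟨?_, Finset.mem_univ _⟩
    exact ne_bot_of_gt (lt_of_le_of_lt hx' (M.lt_gens x h))

/-- The bijection underlying the isomorphism. -/
noncomputable def chainF (n : ℕ) : GEL.MP (chainGEL n) → Finset (Fin (n + 1))
  | none => ∅
  | some M => insert M.1.z M.1.gens

lemma chainF_injective (n : ℕ) : Function.Injective (chainF n) := by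
  intro a b h
  match a, b with
  | none, none => rfl
  | none, some B => exact absurd h.symm (Finset.insert_ne_empty _ _)
  | some A, none => exact absurd h (Finset.insert_ne_empty _ _)
  | some A, some B =>
    have h' : insert A.1.z A.1.gens = insert B.1.z B.1.gens := h
    have h1 : A.1.z = B.1.z ∨ A.1.z ∈ B.1.gens :=
      Finset.mem_insert.mp (h' ▸ Finset.mem_insert_self _ _)
    have h2 : B.1.z = A.1.z ∨ B.1.z ∈ A.1.gens :=
      Finset.mem_insert.mp (h' ▸ Finset.mem_insert_self B.1.z B.1.gens)
    have hz : A.1.z = B.1.z := by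
      rcases h1 with h1 | h1
      · exact h1
      · rcases h2 with h2 | h2
        · exact h2.symm
        · exact absurd (B.1.lt_gens _ h1) (not_lt_of_gt (A.1.lt_gens _ h2))
    have hg : A.1.gens = B.1.gens := by
      ext g
      constructor
      · intro hg
        rcases Finset.mem_insert.mp (h' ▸ Finset.mem_insert_of_mem hg) with h3 | h3
        · exact absurd h3 (ne_of_gt (hz ▸ A.1.lt_gens g hg))
        · exact h3
      · intro hg
        rcases Finset.mem_insert.mp
            (h' ▸ Finset.mem_insert_of_mem hg : g ∈ insert A.1.z A.1.gens)
            with h3 | h3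
        · exact absurd h3 (ne_of_gt (hz ▸ B.1.lt_gens g hg))
        · exact h3
    exact congrArg some (Subtype.ext (GEL.ext' hz hg))

lemma chainF_surjective (n : ℕ) : Function.Surjective (chainF n) := by
  intro A
  rcases A.eq_empty_or_nonempty with rfl | hne
  · exact ⟨none, rfl⟩
  · refine ⟨some ⟨⟨A.min' hne, A.erase (A.min' hne), fun g hg =>
      lt_of_le_of_ne (A.min'_le g (Finset.mem_erase.mp hg).2)
        (Ne.symm (Finset.mem_erase.mp hg).1)⟩, chain_minor _⟩, ?_⟩
    exact Finset.insert_erase (A.min'_mem hne)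

end ChainProof

/-- The minor poset of the chain of length `n` with its minimal generating set
is isomorphic to the Boolean algebra `B_{n+1}`. -/
theorem minorPoset_chain_iso_boolean (n : ℕ) :
    ∃ e : GEL.MP (chainGEL n) ≃ Finset (Fin (n + 1)),
      ∀ a b : GEL.MP (chainGEL n), GEL.mple (chainGEL n) a b ↔ e a ⊆ e b := by
  refine ⟨Equiv.ofBijective (ChainProof.chainF n)
    ⟨ChainProof.chainF_injective n, ChainProof.chainF_surjective n⟩, ?_⟩
  intro a b
  have he : ∀ x, (Equiv.ofBijective (ChainProof.chainF n)
      ⟨ChainProof.chainF_injective n, ChainProof.chainF_surjective n⟩) x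
      = ChainProof.chainF n x := fun _ => rfl
  rw [he a, he b]
  match a, b with
  | none, b =>
    simp only [GEL.mple, ChainProof.chainF]
    exact ⟨fun _ => Finset.empty_subset _, fun _ => trivial⟩
  | some A, none =>
    simp only [GEL.mple, ChainProof.chainF]
    exact ⟨fun h => h.elim, fun h => (Finset.insert_ne_empty _ _)
      (Finset.subset_empty.mp h)⟩
  | some A, some B =>
    exact ⟨ChainProof.subset_of_minor _ _, ChainProof.minor_of_subset _ _⟩
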